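/- Let G be a graph on n vertices with n ≥ 2 and number of edges e(G). Then the signless Laplacian spectral radius satisfies q(G) ≤ 2e(G)/(n−1) + n − 2. -/

import Mathlib

open SimpleGraph Finset

attribute [local instance] Classical.propDecidable

noncomputable def signlessLaplacian {V : Type*} [Fintype V] [DecidableEq V] (G : SimpleGraph V) : Matrix V V ℝ :=
  Matrix.diagonal (fun v => (G.degree v : ℝ)) + G.adjMatrix ℝ

/-- The signless Laplacian spectral radius: the largest (real) eigenvalue of Q(G). -/
noncomputable def qspec {V : Type*} [Fintype V] [DecidableEq V] (G : SimpleGraph V) : ℝ :=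
  sSup {μ : ℝ | ∃ x : V → ℝ, x ≠ 0 ∧ (signlessLaplacian G).mulVec x = μ • x}

/-- `S_{n,t}`: the join of a clique on the first `t` vertices with an independent set. -/
def Snt (n t : ℕ) : SimpleGraph (Fin n) :=
  SimpleGraph.fromRel (fun i j => (i : ℕ) < t ∨ (j : ℕ) < t)

/-- `G` contains a copy of `H` as a subgraph. -/
def Contains {W V : Type*} (H : SimpleGraph W) (G : SimpleGraph V) : Prop :=
  ∃ f : H →g G, Function.Injective f

/-- `G` contains vertex-disjoint paths on `2 * a i` vertices, for `i : Fin k`. -/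
def ContainsDisjPaths {V : Type*} (G : SimpleGraph V) {k : ℕ} (a : Fin k → ℕ) : Prop :=
  ∃ f : ∀ i : Fin k, Fin (2 * a i) → V,
    (∀ i, Function.Injective (f i)) ∧
    (∀ i j, i ≠ j → ∀ x y, f i x ≠ f j y) ∧
    (∀ i x y, (SimpleGraph.pathGraph (2 * a i)).Adj x y → G.Adj (f i x) (f i y))

set_option maxHeartbeats 1000000

theorem das_bound {V : Type*} [Fintype V] [DecidableEq V] (G : SimpleGraph V)
    (hn : 2 ≤ Fintype.card V) :
    qspec G ≤ 2 * (G.edgeFinset.card : ℝ) / ((Fintype.card V : ℝ) - 1) +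
      ((Fintype.card V : ℝ) - 2) := by
  set n := Fintype.card V with hn_def
  set m := G.edgeFinset.card with hm_def
  have hn2R : (2:ℝ) ≤ (n:ℝ) := by exact_mod_cast hn
  have hn1R : (0:ℝ) < (n:ℝ) - 1 := by linarith
  have hB0 : (0:ℝ) ≤ 2 * (m:ℝ) / ((n:ℝ) - 1) + ((n:ℝ) - 2) := by
    have h1 : (0:ℝ) ≤ 2 * (m:ℝ) / ((n:ℝ) - 1) :=
      div_nonneg (by positivity) (le_of_lt hn1R)
    linarith
  refine Real.sSup_le ?_ hB0
  rintro μ ⟨x, hx0, hx⟩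
  rcases le_or_gt μ 0 with hμ | hμpos
  · linarith
  -- pointwise eigen-equation
  have heq : ∀ w, μ * x w = (G.degree w : ℝ) * x w + ∑ u ∈ G.neighborFinset w, x u := by
    intro w
    have h1 := congrFun hx w
    rw [signlessLaplacian, Matrix.add_mulVec] at h1
    simpa [Matrix.mulVec_diagonal] using h1.symm
  have hiso : ∀ w, G.degree w = 0 → x w = 0 := by
    intro w hw
    have hN : G.neighborFinset w = ∅ := Finset.card_eq_zero.mp hw
    have h1 : μ * x w = 0 := by simpa [hw, hN] using (heq w).symm
    rcases mul_eq_zero.mp h1 with h | h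
    · exact absurd h (ne_of_gt hμpos)
    · exact h
  obtain ⟨w0, hw0⟩ : ∃ w, x w ≠ 0 := by
    by_contra h
    push_neg at h
    exact hx0 (funext h)
  have hw0d : 0 < G.degree w0 := by
    rcases Nat.eq_zero_or_pos (G.degree w0) with h | h
    · exact absurd (hiso w0 h) hw0
    · exact h
  set T : Finset V := univ.filter (fun u => 0 < G.degree u) with hT
  have hTne : T.Nonempty := ⟨w0, by simp [hT, hw0d]⟩
  set g : V → ℝ := fun u => |x u| / (G.degree u : ℝ) with hg
  obtain ⟨v, hvT, hvmax⟩ := T.exists_max_image g hTne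
  have hvd : 0 < G.degree v := by simpa [hT] using hvT
  have hgv : 0 < g v := by
    have h1 : 0 < g w0 := by
      apply div_pos (abs_pos.mpr hw0)
      exact_mod_cast hw0d
    exact lt_of_lt_of_le h1 (hvmax w0 (by simp [hT, hw0d]))
  -- a nonnegative-at-v eigenvector
  obtain ⟨z, hzeq, hzle, hzv⟩ :
      ∃ z : V → ℝ,
        (∀ w, μ * z w = (G.degree w : ℝ) * z w + ∑ u ∈ G.neighborFinset w, z u) ∧
        (∀ u, z u ≤ |x u|) ∧ z v = |x v| := by
    by_cases h : 0 ≤ x v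
    · exact ⟨x, heq, fun u => le_abs_self _, (abs_of_nonneg h).symm⟩
    · refine ⟨fun u => - x u, ?_, fun u => neg_le_abs _, (abs_of_neg (lt_of_not_ge h)).symm⟩
      intro w
      simp only
      have h2 : ∑ u ∈ G.neighborFinset w, -x u = -∑ u ∈ G.neighborFinset w, x u := by
        simp
      rw [h2]
      linarith [heq w]
  set d := G.degree v with hd_def
  set S := ∑ u ∈ G.neighborFinset v, G.degree u with hS_def
  -- pointwise bound: μ d ≤ d² + S
  have habs : ∀ u ∈ G.neighborFinset v, |x u| ≤ g v * (G.degree u : ℝ) := by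
    intro u hu
    have hadj : G.Adj v u := (SimpleGraph.mem_neighborFinset G v u).mp hu
    have hdu : 0 < G.degree u := (G.degree_pos_iff_exists_adj u).mpr ⟨v, hadj.symm⟩
    have huT : u ∈ T := by simp [hT, hdu]
    have hduR : (0:ℝ) < (G.degree u : ℝ) := by exact_mod_cast hdu
    have h2 : |x u| = g u * (G.degree u : ℝ) := by
      rw [hg]
      field_simp
    rw [h2]
    exact mul_le_mul_of_nonneg_right (hvmax u huT) (Nat.cast_nonneg _)
  have hdR : (0:ℝ) < (d:ℝ) := by exact_mod_cast hvd
  have hzvgd : z v = g v * (d:ℝ) := by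
    rw [hzv, hg]
    field_simp
    exact (mul_div_cancel_right₀ _ (ne_of_gt hdR)).symm
  have hsum : ∑ u ∈ G.neighborFinset v, z u ≤ g v * (S:ℝ) := by
    calc ∑ u ∈ G.neighborFinset v, z u ≤ ∑ u ∈ G.neighborFinset v, |x u| :=
          Finset.sum_le_sum (fun u _ => hzle u)
      _ ≤ ∑ u ∈ G.neighborFinset v, g v * (G.degree u : ℝ) := Finset.sum_le_sum habs
      _ = g v * (S:ℝ) := by rw [← Finset.mul_sum, hS_def]; push_cast; ring
  have hmain : μ * (d:ℝ) ≤ (d:ℝ) * (d:ℝ) + (S:ℝ) := by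
    have h1 := hzeq v
    rw [hzvgd] at h1
    have h3 : g v * (μ * (d:ℝ)) ≤ g v * ((d:ℝ) * (d:ℝ) + (S:ℝ)) := by nlinarith [hsum]
    exact le_of_mul_le_mul_left h3 hgv
  -- combinatorial bounds on S
  have hA : S + d ≤ 2 * m := by
    rw [hS_def, hd_def, hm_def]
    have h1 := Finset.sum_insert (s := G.neighborFinset v) (f := fun u => G.degree u)
      (G.notMem_neighborFinset_self v)
    have h2 : ∑ u ∈ insert v (G.neighborFinset v), G.degree u ≤ ∑ u, G.degree u :=
      Finset.sum_le_sum_of_subset (Finset.subset_univ _)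
    rw [SimpleGraph.sum_degrees_eq_twice_card_edges] at h2
    linarith
  have hB : S + d ≤ d * n := by
    rw [hS_def, hd_def]
    have h1 : ∑ u ∈ G.neighborFinset v, G.degree u ≤ G.degree v * (n - 1) := by
      have h0 := Finset.sum_le_card_nsmul (G.neighborFinset v) (fun u => G.degree u) (n-1)
        (fun u _ => Nat.le_pred_of_lt (G.degree_lt_card_verts u))
      simpa [smul_eq_mul, SimpleGraph.card_neighborFinset_eq_degree] using h0
    have h2 : G.degree v * (n - 1) + G.degree v = G.degree v * n := by
      have h3 : n - 1 + 1 = n := by omega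
      calc G.degree v * (n-1) + G.degree v = G.degree v * (n - 1 + 1) := by ring
        _ = G.degree v * n := by rw [h3]
    linarith
  have hC : 2 * S + d ≤ 2 * m + d * d := by
    set N := G.neighborFinset v with hN
    set PA := univ.filter (fun p : V × V => G.Adj p.1 p.2) with hPA
    set P := PA.filter (fun p => p.1 ∈ N) with hP
    set P1 := P.filter (fun p => p.2 ∈ N) with hP1
    set P2 := P.filter (fun p => ¬ p.2 ∈ N) with hP2
    set P3 := PA.filter (fun p => ¬ p.1 ∈ N ∧ p.2 ∈ N) with hP3
    have hPAcard : PA.card = 2 * m := by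
      have h1 : PA.card = ∑ a : V, ∑ b : V, if G.Adj a b then 1 else 0 := by
        rw [hPA, Finset.card_filter, Fintype.sum_prod_type]
      have h2 : ∀ a : V, (∑ b : V, if G.Adj a b then 1 else 0) = G.degree a := by
        intro a
        rw [← Finset.card_filter]
        simp [SimpleGraph.degree, SimpleGraph.neighborFinset_eq_filter]
      rw [h1]
      simp_rw [h2]
      rw [SimpleGraph.sum_degrees_eq_twice_card_edges]
    have hPcard : P.card = S := by
      have h1 : P.card = ∑ a : V, ∑ b : V, if G.Adj a b ∧ a ∈ N then 1 else 0 := by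
        rw [hP, hPA, Finset.filter_filter, Finset.card_filter, Fintype.sum_prod_type]
      have h2 : ∀ a : V, (∑ b : V, if G.Adj a b ∧ a ∈ N then 1 else 0)
          = if a ∈ N then G.degree a else 0 := by
        intro a
        by_cases ha : a ∈ N
        · simp only [ha, and_true, if_true]
          rw [← Finset.card_filter]
          simp [SimpleGraph.degree, SimpleGraph.neighborFinset_eq_filter]
        · simp [ha]
      rw [h1]
      simp_rw [h2]
      rw [Finset.sum_ite_mem, Finset.univ_inter, hS_def]
    have hsplit : P1.card + P2.card = P.card :=
      Finset.card_filter_add_card_filter_not (p := fun p : V × V => p.2 ∈ N)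
    have hP2P3 : P2.card = P3.card := by
      apply Finset.card_bij' (fun p _ => Prod.swap p) (fun p _ => Prod.swap p)
      · intro p hp
        simp only [hP2, hP, hPA, Finset.mem_filter, Finset.mem_univ, true_and] at hp
        simp only [hP3, hPA, Finset.mem_filter, Finset.mem_univ, true_and, Prod.fst_swap,
          Prod.snd_swap]
        exact ⟨hp.1.1.symm, hp.2, hp.1.2⟩
      · intro p hp
        simp only [hP3, hPA, Finset.mem_filter, Finset.mem_univ, true_and] at hp
        simp only [hP2, hP, hPA, Finset.mem_filter, Finset.mem_univ, true_and, Prod.fst_swap,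
          Prod.snd_swap]
        exact ⟨⟨hp.1.symm, hp.2.2⟩, hp.2.1⟩
      · intro p _; simp
      · intro p _; simp
    have hdisj : Disjoint P P3 := by
      rw [Finset.disjoint_left]
      intro p hp hp3
      simp only [hP, Finset.mem_filter] at hp
      simp only [hP3, Finset.mem_filter] at hp3
      exact hp3.2.1 hp.2
    have hsub : P.card + P3.card ≤ PA.card := by
      rw [← Finset.card_union_of_disjoint hdisj]
      exact Finset.card_le_card (Finset.union_subset (Finset.filter_subset _ _)
        (Finset.filter_subset _ _))
    have hNd : N.card = d := rfl
    have hP1d : P1.card + d ≤ d * d := by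
      have h1 : P1 ⊆ N.offDiag := by
        intro p hp
        simp only [hP1, hP, hPA, Finset.mem_filter, Finset.mem_univ, true_and] at hp
        exact Finset.mem_offDiag.mpr ⟨hp.1.2, hp.2, G.ne_of_adj hp.1.1⟩
      have h2 := Finset.card_le_card h1
      rw [Finset.offDiag_card, hNd] at h2
      have h3 : d ≤ d * d := Nat.le_mul_of_pos_left d hvd
      omega
    have hSP : S = P.card := hPcard.symm
    linarith [hsplit, hP2P3, hsub, hP1d, hPAcard, hSP]
  -- cast to ℝ
  have hA' : (S:ℝ) + (d:ℝ) ≤ 2 * (m:ℝ) := by exact_mod_cast hA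
  have hB' : (S:ℝ) + (d:ℝ) ≤ (d:ℝ) * (n:ℝ) := by exact_mod_cast hB
  have hC' : 2 * (S:ℝ) + (d:ℝ) ≤ 2 * (m:ℝ) + (d:ℝ) * (d:ℝ) := by exact_mod_cast hC
  have hd1' : (1:ℝ) ≤ (d:ℝ) := by exact_mod_cast hvd
  have hdn : d < n := G.degree_lt_card_verts v
  have hdn' : (d:ℝ) ≤ (n:ℝ) - 1 := by
    have : (d:ℝ) + 1 ≤ (n:ℝ) := by exact_mod_cast hdn
    linarith
  have hS0 : (0:ℝ) ≤ (S:ℝ) := Nat.cast_nonneg _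
  have hm0 : (0:ℝ) ≤ (m:ℝ) := Nat.cast_nonneg _
  -- the key algebraic step
  have hstep : ((n:ℝ) - 1) * ((d:ℝ) * (d:ℝ) + (S:ℝ))
      ≤ 2 * (m:ℝ) * (d:ℝ) + ((n:ℝ) - 2) * (((n:ℝ) - 1) * (d:ℝ)) := by
    rcases Nat.lt_or_ge d (n - 1) with hcase | hcase
    · -- d ≤ n - 2
      have hd2 : (d:ℝ) ≤ (n:ℝ) - 2 := by
        have : d + 2 ≤ n := by omega
        have := (Nat.cast_le (α := ℝ)).mpr this
        push_cast at this
        linarith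
      rcases le_or_gt (2 * (m:ℝ)) (((n:ℝ) - 1) * (d:ℝ)) with h1 | h1
      · nlinarith [mul_nonneg (by linarith : (0:ℝ) ≤ (n:ℝ) - 1 - d)
            (by linarith : (0:ℝ) ≤ ((n:ℝ) - 1) * (d:ℝ) - 2 * m),
          mul_nonneg (by linarith : (0:ℝ) ≤ (n:ℝ) - 1)
            (by linarith : (0:ℝ) ≤ 2 * (m:ℝ) - d - S)]
      · rcases le_or_gt (((n:ℝ) - 1) * ((d:ℝ) + 1)) (2 * (m:ℝ)) with h2 | h2
        · nlinarith [mul_nonneg (by linarith : (0:ℝ) ≤ (n:ℝ) - 1)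
              (by nlinarith : (0:ℝ) ≤ (d:ℝ) * ((n:ℝ) - 1) - S),
            mul_nonneg (by linarith : (0:ℝ) ≤ (d:ℝ))
              (by linarith : (0:ℝ) ≤ 2 * (m:ℝ) - ((n:ℝ) - 1) * ((d:ℝ) + 1))]
        · rcases le_or_gt (2 * (d:ℝ)) ((n:ℝ) - 1) with h3 | h3
          · nlinarith [mul_nonneg
                (by nlinarith : (0:ℝ) ≤ ((n:ℝ) - 1) + (((n:ℝ) - 1) * d - 2 * m))
                (by linarith : (0:ℝ) ≤ (n:ℝ) - 1 - 2 * d),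
              mul_nonneg (mul_nonneg (by linarith : (0:ℝ) ≤ (n:ℝ) - 1)
                (by linarith : (0:ℝ) ≤ (d:ℝ) - 1)) (by linarith : (0:ℝ) ≤ (n:ℝ) - 1 - d),
              mul_nonneg (by linarith : (0:ℝ) ≤ (n:ℝ) - 1)
                (by linarith : (0:ℝ) ≤ 2 * (m:ℝ) + d * d - d - 2 * S)]
          · nlinarith [mul_nonneg (by linarith : (0:ℝ) ≤ 2 * (m:ℝ) - ((n:ℝ) - 1) * d)
                (by linarith : (0:ℝ) ≤ 2 * (d:ℝ) - ((n:ℝ) - 1)),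
              mul_nonneg (mul_nonneg (by linarith : (0:ℝ) ≤ (n:ℝ) - 1)
                (by linarith : (0:ℝ) ≤ (d:ℝ))) (by linarith : (0:ℝ) ≤ (n:ℝ) - 2 - d),
              mul_nonneg (by linarith : (0:ℝ) ≤ (n:ℝ) - 1)
                (by linarith : (0:ℝ) ≤ 2 * (m:ℝ) + d * d - d - 2 * S)]
    · -- d = n - 1
      have hdeq : (d:ℝ) = (n:ℝ) - 1 := by
        have : d = n - 1 := by omega
        have h4 : (d:ℝ) + 1 = (n:ℝ) := by exact_mod_cast (by omega : d + 1 = n)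
        linarith
      nlinarith [mul_nonneg (by linarith : (0:ℝ) ≤ (d:ℝ))
          (by linarith : (0:ℝ) ≤ 2 * (m:ℝ) - d - S)]
  -- conclude
  have hposden : (0:ℝ) < ((n:ℝ) - 1) * (d:ℝ) := mul_pos hn1R hdR
  have hfin : μ * (((n:ℝ) - 1) * (d:ℝ))
      ≤ (2 * (m:ℝ) / ((n:ℝ) - 1) + ((n:ℝ) - 2)) * (((n:ℝ) - 1) * (d:ℝ)) := by
    have hexp : (2 * (m:ℝ) / ((n:ℝ) - 1) + ((n:ℝ) - 2)) * (((n:ℝ) - 1) * (d:ℝ))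
        = 2 * (m:ℝ) * (d:ℝ) + ((n:ℝ) - 2) * (((n:ℝ) - 1) * (d:ℝ)) := by
      field_simp
    rw [hexp]
    nlinarith [mul_le_mul_of_nonneg_left hmain (le_of_lt hn1R), hstep]
  exact le_of_mul_le_mul_right hfin hposden
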